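/- Let G be a simple graph, let M be a matching of G, and let P be an M-augmenting path. Then the symmetric difference of M with the edge set of P is a matching of G whose support is V(M) ∪ V(P); in particular, its support strictly contains V(M). -/

import Mathlib

namespace PaperMatchings

variable {V : Type*}

/-- The support of a set of edges: all vertices incident to some edge in `M`. -/
def supp (M : Set (Sym2 V)) : Set V := {v | ∃ e ∈ M, v ∈ e}

/-- `M` is a matching of `G`: a set of edges of `G` such that no vertex is
incident to more than one edge of `M`. -/
def IsMatching (G : SimpleGraph V) (M : Set (Sym2 V)) : Prop :=
  M ⊆ G.edgeSet ∧ ∀ (v : V), ∀ e ∈ M, ∀ e' ∈ M, v ∈ e → v ∈ e' → e = e'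

/-- A perfect matching: a matching whose support is all of `V`. -/
def IsPerfectMatching (G : SimpleGraph V) (M : Set (Sym2 V)) : Prop :=
  IsMatching G M ∧ supp M = Set.univ

/-- A (finite or infinite) path in `G`, given by its number of vertices `n : ℕ∞`
(`⊤` meaning infinite) and the enumeration `f` of its vertices: it is injective on
indices below `n` and consecutive vertices are adjacent. -/
def IsPath (G : SimpleGraph V) (n : ℕ∞) (f : ℕ → V) : Prop :=
  1 ≤ n ∧
  (∀ i j : ℕ, (i : ℕ∞) < n → (j : ℕ∞) < n → f i = f j → i = j) ∧
  (∀ i : ℕ, ((i : ℕ∞) + 1) < n → G.Adj (f i) (f (i + 1)))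

/-- The consecutive edges of the path lie alternately in `M` and outside `M`. -/
def IsAlternating (M : Set (Sym2 V)) (n : ℕ∞) (f : ℕ → V) : Prop :=
  ∀ i : ℕ, ((i : ℕ∞) + 2) < n →
    (s(f i, f (i + 1)) ∈ M ↔ s(f (i + 1), f (i + 2)) ∉ M)

/-- An `M`-augmenting path starting at `s`: an `M`-alternating path (with at least one
edge) starting at the unmatched vertex `s`, which is either infinite or ends at an
unmatched vertex. -/
def IsAugmentingPath (G : SimpleGraph V) (M : Set (Sym2 V)) (n : ℕ∞) (f : ℕ → V)
    (s : V) : Prop :=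
  IsPath G n f ∧ IsAlternating M n f ∧ 1 < n ∧ f 0 = s ∧ s ∉ supp M ∧
  ∀ k : ℕ, n = (k : ℕ∞) + 1 → f k ∉ supp M

/-- The path contains at least one edge of `M`. -/
def IsProper (M : Set (Sym2 V)) (n : ℕ∞) (f : ℕ → V) : Prop :=
  ∃ i : ℕ, ((i : ℕ∞) + 1) < n ∧ s(f i, f (i + 1)) ∈ M

/-- Condition (A): for every matching `M` and every vertex `s` not in the support
of `M` there is an `M`-augmenting path starting at `s`. -/
def ConditionA (G : SimpleGraph V) : Prop :=
  ∀ M : Set (Sym2 V), IsMatching G M → ∀ s : V, s ∉ supp M →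
    ∃ (n : ℕ∞) (f : ℕ → V), IsAugmentingPath G M n f s

/-- An independent matching: a matching admitting no proper augmenting path. -/
def IndepMatching (G : SimpleGraph V) (M : Set (Sym2 V)) : Prop :=
  IsMatching G M ∧
    ¬ ∃ (s : V) (n : ℕ∞) (f : ℕ → V), IsAugmentingPath G M n f s ∧ IsProper M n f

/-- The induced subgraph of `G` on the vertex set `S` (vertices outside `S`
become isolated). -/
def restrict (G : SimpleGraph V) (S : Set V) : SimpleGraph V where
  Adj u v := G.Adj u v ∧ u ∈ S ∧ v ∈ S
  symm := by
    constructor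
    intro u v h
    exact ⟨h.1.symm, h.2.2, h.2.1⟩
  loopless := by
    constructor
    intro v h
    exact h.1.ne rfl

/-- `W` is an independent subgraph of `G`: the induced subgraph `G[W]` has a perfect
matching (i.e. `G` has a matching with support exactly `W`) and every such matching
is an independent matching of `G`. -/
def IndepSubgraph (G : SimpleGraph V) (W : Set V) : Prop :=
  (∃ M, IsMatching G M ∧ supp M = W) ∧
  ∀ M, IsMatching G M → supp M = W → IndepMatching G M

/-- The induced subgraph `G[W]` satisfies condition (A): for every matching of
`G[W]` and every vertex of `W` not in its support, there is an augmenting path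
inside `G[W]`. -/
def ConditionAOn (G : SimpleGraph V) (W : Set V) : Prop :=
  ∀ M : Set (Sym2 V), IsMatching (restrict G W) M → ∀ s ∈ W, s ∉ supp M →
    ∃ (n : ℕ∞) (f : ℕ → V), IsAugmentingPath (restrict G W) M n f s


/-- Augmenting a matching along an augmenting path yields a matching
whose support is `V(M) ∪ V(P)`, which strictly contains `V(M)`. -/
theorem symmDiff_augmenting_path {V : Type*} (G : SimpleGraph V) (M : Set (Sym2 V))
    (hM : IsMatching G M) (n : ℕ∞) (f : ℕ → V) (s : V)
    (hP : IsAugmentingPath G M n f s) :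
    IsMatching G (symmDiff M {e : Sym2 V | ∃ i : ℕ, ((i : ℕ∞) + 1) < n ∧ e = s(f i, f (i + 1))}) ∧
    supp (symmDiff M {e : Sym2 V | ∃ i : ℕ, ((i : ℕ∞) + 1) < n ∧ e = s(f i, f (i + 1))}) =
      supp M ∪ {v : V | ∃ i : ℕ, (i : ℕ∞) < n ∧ v = f i} ∧
    supp M ⊂ supp (symmDiff M {e : Sym2 V | ∃ i : ℕ, ((i : ℕ∞) + 1) < n ∧ e = s(f i, f (i + 1))}) := by
  obtain ⟨⟨hn1, hinj, hadj⟩, halt, hn, hf0, hs, hlast⟩ := hP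
  set E : Set (Sym2 V) := {e : Sym2 V | ∃ i : ℕ, ((i : ℕ∞) + 1) < n ∧ e = s(f i, f (i + 1))}
    with hE
  have fin_lt : ∀ i : ℕ, ((i : ℕ∞) + 1) < n → (i : ℕ∞) < n := fun i h =>
    lt_of_le_of_lt le_self_add h
  have cast1 : ∀ i : ℕ, (((i + 1 : ℕ) : ℕ∞)) = (i : ℕ∞) + 1 := by intro i; push_cast; ring
  have cast2 : ∀ i : ℕ, (((i + 2 : ℕ) : ℕ∞)) = (i : ℕ∞) + 2 := by intro i; push_cast; ring
  have hiE : ∀ i : ℕ, ((i : ℕ∞) + 1) < n → s(f i, f (i + 1)) ∈ E := fun i h => ⟨i, h, rfl⟩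
  -- parity of edges
  have parity : ∀ i : ℕ, ((i : ℕ∞) + 1) < n → (s(f i, f (i + 1)) ∈ M ↔ Odd i) := by
    intro i
    induction i with
    | zero =>
      intro _
      constructor
      · intro hmem
        exact absurd ⟨s(f 0, f (0 + 1)), hmem, by rw [← hf0]; exact Sym2.mem_mk_left _ _⟩ hs
      · intro h
        exact absurd h (by decide)
    | succ j ih =>
      intro h
      have h' : ((j : ℕ∞) + 1) + 1 < n := by rw [cast1] at h; exact h
      have hj : ((j : ℕ∞) + 1) < n := lt_of_le_of_lt le_self_add h' 
      have h2 : ((j : ℕ∞) + 2) < n := by rw [cast1] at h; rw [show (j : ℕ∞) + 2 = (j : ℕ∞) + 1 + 1 by ring]; exact h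
      have ha := halt j h2
      have hij := ih hj
      show s(f (j + 1), f (j + 2)) ∈ M ↔ Odd (j + 1)
      rw [Nat.odd_add_one, ← hij]
      tauto
  have edge_last : ∀ i : ℕ, ((i : ℕ∞) + 1) < n → ¬ ((i : ℕ∞) + 2) < n → f (i + 1) ∉ supp M := by
    intro i hi h2
    have hle : n ≤ (i : ℕ∞) + 2 := not_lt.mp h2
    have hge : (i : ℕ∞) + 2 ≤ n := by
      have := Order.add_one_le_of_lt hi
      calc (i : ℕ∞) + 2 = (i : ℕ∞) + 1 + 1 := by ring
        _ ≤ n := Order.add_one_le_of_lt hi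
    exact hlast (i + 1) (by rw [cast1]; rw [show (i : ℕ∞) + 1 + 1 = (i : ℕ∞) + 2 by ring]; exact le_antisymm hle hge)
  -- mixed case: an M-edge not on the path and a path edge not in M cannot share a vertex
  have mixed : ∀ e, e ∈ M → e ∉ E → ∀ i : ℕ, ((i : ℕ∞) + 1) < n →
      s(f i, f (i + 1)) ∉ M → ∀ v, v ∈ e → v ∈ s(f i, f (i + 1)) → False := by
    intro e heM heE i hi him v hv hv'
    have hieven : ¬ Odd i := fun h => him ((parity i hi).mpr h)
    rcases Sym2.mem_iff.mp hv' with h | h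
    · -- v = f i
      rcases i with _ | j
      · exact hs ⟨e, heM, by rwa [← hf0, ← h]⟩
      · have hodd : Odd j := by rw [Nat.odd_iff] at hieven ⊢; omega
        have hj : ((j : ℕ∞) + 1) < n := by rw [← cast1]; exact fin_lt _ (by rw [cast1]; exact hi)
        have hjM : s(f j, f (j + 1)) ∈ M := (parity j hj).mpr hodd
        have : e = s(f j, f (j + 1)) :=
          hM.2 v e heM _ hjM hv (by rw [h]; exact Sym2.mem_mk_right _ _)
        exact heE (this ▸ hiE j hj)
    · -- v = f (i+1)
      by_cases h2 : ((i : ℕ∞) + 2) < n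
      · have hi1 : (((i + 1 : ℕ) : ℕ∞) + 1) < n := by rw [cast1]; rw [show (i:ℕ∞)+1+1 = (i:ℕ∞)+2 by ring]; exact h2
        have hjM : s(f (i + 1), f (i + 2)) ∈ M := (parity (i + 1) hi1).mpr (by rw [Nat.odd_iff] at hieven ⊢; omega)
        have : e = s(f (i + 1), f (i + 2)) :=
          hM.2 v e heM _ hjM hv (by rw [h]; exact Sym2.mem_mk_left _ _)
        exact heE (this ▸ hiE (i + 1) hi1)
      · exact edge_last i hi h2 ⟨e, heM, h ▸ hv⟩
  -- the set after symmetric difference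
  set N := symmDiff M E with hN
  have memN : ∀ e, e ∈ N ↔ (e ∈ M ∧ e ∉ E) ∨ (e ∈ E ∧ e ∉ M) := fun e => Set.mem_symmDiff
  -- N is a matching
  have hmatch : IsMatching G N := by
    constructor
    · intro e he
      rcases (memN e).mp he with ⟨h1, _⟩ | ⟨⟨i, hi, rfl⟩, _⟩
      · exact hM.1 h1
      · exact (G.mem_edgeSet).mpr (hadj i hi)
    · intro v e he e' he' hv hv'
      rcases (memN e).mp he with ⟨h1, h2⟩ | ⟨⟨i, hi, rfl⟩, h2⟩ <;>
        rcases (memN e').mp he' with ⟨h1', h2'⟩ | ⟨⟨j, hj, rfl⟩, h2'⟩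
      · exact hM.2 v e h1 e' h1' hv hv'
      · exact absurd (mixed e h1 h2 j hj h2' v hv hv') not_false
      · exact absurd (mixed e' h1' h2' i hi h2 v hv' hv) not_false
      · -- both path edges not in M
        have hie : ¬ Odd i := fun h => h2 ((parity i hi).mpr h)
        have hje : ¬ Odd j := fun h => h2' ((parity j hj).mpr h)
        have hij : i = j := by
          rw [Nat.odd_iff] at hie hje
          have hi' := fin_lt i hi
          have hj' := fin_lt j hj
          have hi1 : ((i + 1 : ℕ) : ℕ∞) < n := by rw [cast1]; exact hi
          have hj1 : ((j + 1 : ℕ) : ℕ∞) < n := by rw [cast1]; exact hj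
          rcases Sym2.mem_iff.mp hv with ha | ha <;> rcases Sym2.mem_iff.mp hv' with hb | hb
          · exact hinj i j hi' hj' (ha ▸ hb ▸ rfl)
          · have := hinj i (j + 1) hi' hj1 (ha ▸ hb ▸ rfl); omega
          · have := hinj (i + 1) j hi1 hj' (ha ▸ hb ▸ rfl); omega
          · have := hinj (i + 1) (j + 1) hi1 hj1 (ha ▸ hb ▸ rfl); omega
        subst hij; rfl
  -- support equality
  have hsupp : supp N = supp M ∪ {v : V | ∃ i : ℕ, (i : ℕ∞) < n ∧ v = f i} := by
    ext v
    constructor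
    · rintro ⟨e, he, hv⟩
      rcases (memN e).mp he with ⟨h1, _⟩ | ⟨⟨i, hi, rfl⟩, _⟩
      · exact Or.inl ⟨e, h1, hv⟩
      · rcases Sym2.mem_iff.mp hv with h | h
        · exact Or.inr ⟨i, fin_lt i hi, h⟩
        · exact Or.inr ⟨i + 1, by rw [cast1]; exact hi, h⟩
    · rintro (⟨e, he, hv⟩ | ⟨i, hi, rfl⟩)
      · by_cases heE : e ∈ E
        · obtain ⟨i, hi, rfl⟩ := heE
          have hodd : Odd i := (parity i hi).mp he
          rcases Sym2.mem_iff.mp hv with h | h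
          · rcases i with _ | j
            · exact absurd hodd (by decide)
            · have hj : ((j : ℕ∞) + 1) < n := by rw [← cast1]; exact fin_lt _ (by rw [cast1]; exact hi)
              have hjM : s(f j, f (j + 1)) ∉ M := fun hc => by
                have := (parity j hj).mp hc
                rw [Nat.odd_iff] at this hodd; omega
              exact ⟨s(f j, f (j + 1)), (memN _).mpr (Or.inr ⟨hiE j hj, hjM⟩),
                by rw [h]; exact Sym2.mem_mk_right _ _⟩
          · by_cases h2 : ((i : ℕ∞) + 2) < n
            · have hi1 : (((i + 1 : ℕ) : ℕ∞) + 1) < n := by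
                rw [cast1]; rw [show (i:ℕ∞)+1+1 = (i:ℕ∞)+2 by ring]; exact h2
              have hjM : s(f (i + 1), f (i + 2)) ∉ M := fun hc => by
                have := (parity (i + 1) hi1).mp hc
                rw [Nat.odd_iff] at this hodd; omega
              exact ⟨s(f (i + 1), f (i + 2)), (memN _).mpr (Or.inr ⟨hiE (i + 1) hi1, hjM⟩),
                by rw [h]; exact Sym2.mem_mk_left _ _⟩
            · exact absurd ⟨s(f i, f (i + 1)), he, hv⟩ (h ▸ edge_last i hi h2)
        · exact ⟨e, (memN e).mpr (Or.inl ⟨he, heE⟩), hv⟩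
      · -- v = f i with i < n
        by_cases hi1 : ((i : ℕ∞) + 1) < n
        · by_cases hm : s(f i, f (i + 1)) ∈ M
          · have hodd : Odd i := (parity i hi1).mp hm
            rcases i with _ | j
            · exact absurd hodd (by decide)
            · have hj : ((j : ℕ∞) + 1) < n := by rw [← cast1]; exact fin_lt _ (by rw [cast1]; exact hi1)
              have hjM : s(f j, f (j + 1)) ∉ M := fun hc => by
                have := (parity j hj).mp hc
                rw [Nat.odd_iff] at this hodd; omega
              exact ⟨s(f j, f (j + 1)), (memN _).mpr (Or.inr ⟨hiE j hj, hjM⟩),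
                Sym2.mem_mk_right _ _⟩
          · exact ⟨s(f i, f (i + 1)), (memN _).mpr (Or.inr ⟨hiE i hi1, hm⟩),
              Sym2.mem_mk_left _ _⟩
        · -- last vertex
          have hni : n = (i : ℕ∞) + 1 :=
            le_antisymm (not_lt.mp hi1) (Order.add_one_le_of_lt hi)
          rcases i with _ | j
          · rw [hni] at hn; simp at hn
          · have hj : ((j : ℕ∞) + 1) < n := by rw [← cast1]; exact hi
            have hjM : s(f j, f (j + 1)) ∉ M := fun hc =>
              hlast (j + 1) (by rw [cast1]; exact hni) ⟨_, hc, Sym2.mem_mk_right _ _⟩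
            exact ⟨s(f j, f (j + 1)), (memN _).mpr (Or.inr ⟨hiE j hj, hjM⟩),
              Sym2.mem_mk_right _ _⟩
  refine ⟨hmatch, hsupp, ?_⟩
  rw [hsupp]
  refine ⟨Set.subset_union_left, fun h => hs ?_⟩
  exact h (Or.inr ⟨0, by exact_mod_cast lt_trans zero_lt_one hn, hf0.symm⟩)

end PaperMatchings
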